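/- Let W_n = ⊕_{i=1}^n K[x_1,…,x_n]·u_i be the free K[X_n]-module of rank n with the S_n-action permuting simultaneously the u_i and x_i, and let W' = {Σ u_i p_i(X_n) ∈ W_n : Σ_{i=1}^n x_i p_i(X_n) = 0}. Then the set of S_n-invariant elements of W' is generated as a module over K[X_n]^{S_n} by the elements h_{ij} = j·ε_i·e_j − i·ε_j·e_i for 1 ≤ i < j ≤ n, where ε_m = Σ_{i=1}^n u_i · e_{m-1}(x_1,…,\hat{x_i},…,x_n) and e_m is the m-th elementary symmetric polynomial. -/

import Mathlib

noncomputable section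
set_option maxHeartbeats 1000000
set_option synthInstance.maxHeartbeats 1000000
open MvPolynomial Finset

/-- `e_q(x_1,…,x̂_k,…,x_n)`, the `q`-th elementary symmetric polynomial omitting `x_k`. -/
def eo (K : Type*) [Field K] (n q : ℕ) (k : Fin n) : MvPolynomial (Fin n) K :=
  ∑ S ∈ powersetCard q ((univ : Finset (Fin n)).erase k), ∏ t ∈ S, X t

/-- `e_q(X_n)`, the `q`-th elementary symmetric polynomial. -/
def el (K : Type*) [Field K] (n q : ℕ) : MvPolynomial (Fin n) K :=
  ∑ S ∈ powersetCard q (univ : Finset (Fin n)), ∏ t ∈ S, X t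


lemma el_eq_esymm (K : Type*) [Field K] (n q : ℕ) : el K n q = esymm (Fin n) K q := rfl

lemma el_isSymmetric (K : Type*) [Field K] (n q : ℕ) : (el K n q).IsSymmetric := by
  rw [el_eq_esymm]; exact esymm_isSymmetric _ _ _

lemma eo_zero (K : Type*) [Field K] (n : ℕ) (k : Fin n) : eo K n 0 k = 1 := by
  simp [eo]

lemma eo_of_ge (K : Type*) [Field K] {n q : ℕ} (k : Fin n) (h : n ≤ q) : eo K n q k = 0 := by
  have hk : k ∈ (univ : Finset (Fin n)) := mem_univ k
  have hc : #((univ : Finset (Fin n)).erase k) < q := by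
    rw [card_erase_of_mem hk, card_univ, Fintype.card_fin]
    have := k.isLt; omega
  rw [eo, powersetCard_eq_empty.2 hc, sum_empty]

lemma el_of_gt (K : Type*) [Field K] {n q : ℕ} (h : n < q) : el K n q = 0 := by
  have hc : #(univ : Finset (Fin n)) < q := by rw [card_univ, Fintype.card_fin]; omega
  rw [el, powersetCard_eq_empty.2 hc, sum_empty]

lemma el_succ (K : Type*) [Field K] (n q : ℕ) (k : Fin n) :
    el K n (q+1) = eo K n (q+1) k + X k * eo K n q k := by
  have hk : k ∉ (univ : Finset (Fin n)).erase k := notMem_erase k _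
  have hu : (univ : Finset (Fin n)) = insert k (univ.erase k) := (insert_erase (mem_univ k)).symm
  have hdisj : Disjoint (powersetCard (q+1) ((univ : Finset (Fin n)).erase k))
      (image (insert k) (powersetCard q ((univ : Finset (Fin n)).erase k))) := by
    rw [disjoint_left]
    intro S hS hS'
    obtain ⟨T, hT, rfl⟩ := mem_image.1 hS'
    exact hk ((mem_powersetCard.1 hS).1 (mem_insert_self k T))
  rw [el, hu, powersetCard_succ_insert hk, sum_union hdisj]
  congr 1
  rw [eo, mul_sum, sum_image ?inj]
  case inj =>
    intro S hS T hT hST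
    have hkS : k ∉ S := fun h => hk ((mem_powersetCard.1 hS).1 h)
    have hkT : k ∉ T := fun h => hk ((mem_powersetCard.1 hT).1 h)
    rw [← erase_insert hkS, ← erase_insert hkT, hST]
  refine sum_congr rfl fun S hS => ?_
  rw [prod_insert (fun h => hk ((mem_powersetCard.1 hS).1 h))]

lemma sum_eo (K : Type*) [Field K] (n q : ℕ) :
    ∑ k : Fin n, eo K n q k = ((n - q : ℕ) : MvPolynomial (Fin n) K) * el K n q := by
  have h1 : ∀ k : Fin n, powersetCard q ((univ : Finset (Fin n)).erase k)
      = (powersetCard q univ).filter (fun S => k ∉ S) := by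
    intro k; ext S
    simp only [mem_powersetCard, mem_filter, subset_erase, subset_univ, true_and]
    tauto
  calc ∑ k : Fin n, eo K n q k
      = ∑ k : Fin n, ∑ S ∈ powersetCard q (univ : Finset (Fin n)),
          if k ∉ S then ∏ t ∈ S, (X t : MvPolynomial (Fin n) K) else 0 := by
        refine sum_congr rfl fun k _ => ?_
        rw [eo, h1 k, sum_filter]
    _ = ∑ S ∈ powersetCard q (univ : Finset (Fin n)), ∑ k : Fin n,
          if k ∉ S then ∏ t ∈ S, (X t : MvPolynomial (Fin n) K) else 0 := sum_comm
    _ = ((n - q : ℕ) : MvPolynomial (Fin n) K) * el K n q := by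
        rw [el, mul_sum]
        refine sum_congr rfl fun S hS => ?_
        rw [sum_ite, sum_const_zero, add_zero, sum_const, nsmul_eq_mul]
        congr 2
        have : (univ : Finset (Fin n)).filter (fun k => k ∉ S) = Sᶜ := by
          ext x; simp [Finset.mem_compl]
        rw [this, card_compl, Fintype.card_fin, (mem_powersetCard.1 hS).2]

lemma sum_X_mul_eo (K : Type*) [Field K] (n q : ℕ) :
    ∑ k : Fin n, X k * eo K n q k
      = ((q+1 : ℕ) : MvPolynomial (Fin n) K) * el K n (q+1) := by
  have h : ∀ k : Fin n, X k * eo K n q k = el K n (q+1) - eo K n (q+1) k := fun k => by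
    rw [el_succ K n q k]; ring
  rw [Finset.sum_congr rfl (fun k _ => h k), Finset.sum_sub_distrib, sum_const, sum_eo,
    card_univ, Fintype.card_fin, nsmul_eq_mul]
  rcases le_or_gt (q+1) n with h1 | h1
  · rw [← sub_mul]
    congr 1
    have : ((n - (q+1) : ℕ) : MvPolynomial (Fin n) K) = (n : MvPolynomial (Fin n) K) - (q+1 : ℕ) := by
      push_cast [Nat.cast_sub h1]; ring
    rw [this]; push_cast; ring
  · rw [el_of_gt K h1]; ring

lemma rename_eo (K : Type*) [Field K] {n q : ℕ} (σ : Equiv.Perm (Fin n)) (k : Fin n) :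
    rename σ (eo K n q k) = eo K n q (σ k) := by
  have hset : (univ : Finset (Fin n)).erase (σ k)
      = Finset.map σ.toEmbedding ((univ : Finset (Fin n)).erase k) := by
    ext x
    simp only [mem_erase, mem_univ, and_true, Finset.mem_map, Equiv.coe_toEmbedding]
    constructor
    · intro hx
      exact ⟨σ.symm x, fun h => hx (by rw [← h]; simp), by simp⟩
    · rintro ⟨y, hy, rfl⟩
      exact fun h => hy (σ.injective h)
  rw [eo, map_sum, eo, hset, powersetCard_map, sum_map]
  refine sum_congr rfl fun S hS => ?_
  rw [map_prod]
  have : (Finset.mapEmbedding σ.toEmbedding).toEmbedding S = S.map σ.toEmbedding := rfl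
  rw [this, Finset.prod_map]
  refine prod_congr rfl fun t ht => ?_
  simp

lemma koszul (K : Type*) [Field K] : ∀ (N : ℕ) (a : Fin N → MvPolynomial (Fin N) K),
    (∑ i, X i * a i = 0) →
    ∃ c : Fin N → Fin N → MvPolynomial (Fin N) K,
      (∀ i l, c i l = - c l i) ∧ ∀ i, a i = ∑ l, X l * c i l := by
  intro N
  induction N with
  | zero =>
    intro a _
    exact ⟨fun _ _ => 0, fun i => i.elim0, fun i => i.elim0⟩
  | succ N ih =>
    intro a ha
    have hrel : Polynomial.X * (MvPolynomial.finSuccEquiv K N) (a 0)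
        + ∑ i : Fin N, Polynomial.C (X i) * (MvPolynomial.finSuccEquiv K N) (a i.succ) = 0 := by
      have h := congrArg (MvPolynomial.finSuccEquiv K N) ha
      rw [map_sum, map_zero, Fin.sum_univ_succ] at h
      simpa only [map_mul, finSuccEquiv_X_zero, finSuccEquiv_X_succ] using h
    set A : Fin (N+1) → Polynomial (MvPolynomial (Fin N) K) :=
      fun i => (MvPolynomial.finSuccEquiv K N) (a i) with hA
    have hrel' : Polynomial.X * A 0 + ∑ i : Fin N, Polynomial.C (X i) * A i.succ = 0 := hrel
    have hc0 : ∑ i : Fin N, X i * (A i.succ).coeff 0 = 0 := by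
      have h := congrArg (fun p => Polynomial.coeff p 0) hrel'
      simpa only [Polynomial.coeff_add, Polynomial.coeff_zero, Polynomial.mul_coeff_zero,
        Polynomial.coeff_X_zero, zero_mul, Polynomial.coeff_C_zero, zero_add,
        Polynomial.finset_sum_coeff] using h
    obtain ⟨c', hc'anti, hc'⟩ := ih (fun i => (A i.succ).coeff 0) hc0
    set B : Fin N → Polynomial (MvPolynomial (Fin N) K) := fun i => (A i.succ).divX with hB
    have hAsucc : ∀ i, A i.succ = Polynomial.C ((A i.succ).coeff 0) + Polynomial.X * B i := by
      intro i
      rw [hB, add_comm, Polynomial.X_mul_divX_add]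
    have hA0 : A 0 = - ∑ i : Fin N, Polynomial.C (X i) * B i := by
      have h2 : Polynomial.X * A 0
          = Polynomial.X * (- ∑ i : Fin N, Polynomial.C (X i) * B i) := by
        have h3 : Polynomial.X * A 0 = - ∑ i : Fin N, Polynomial.C (X i) * A i.succ := by
          rw [eq_neg_iff_add_eq_zero]; exact hrel'
        have h4 : ∑ i : Fin N, Polynomial.C (X i) * A i.succ
            = Polynomial.C (∑ i : Fin N, X i * (A i.succ).coeff 0)
              + Polynomial.X * ∑ i : Fin N, Polynomial.C (X i) * B i := by
          rw [map_sum, mul_sum, ← sum_add_distrib]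
          refine sum_congr rfl fun i _ => ?_
          conv_lhs => rw [hAsucc i]
          rw [map_mul]; ring
        rw [h3, h4, hc0, map_zero, zero_add]; ring
      exact mul_left_cancel₀ Polynomial.X_ne_zero h2
    refine ⟨fun i => Fin.cases
        (Fin.cases 0 (fun l' => - (MvPolynomial.finSuccEquiv K N).symm (B l')))
        (fun i' => Fin.cases ((MvPolynomial.finSuccEquiv K N).symm (B i'))
          (fun l' => (MvPolynomial.finSuccEquiv K N).symm (Polynomial.C (c' i' l')))) i,
      ?_, ?_⟩
    · intro i l
      induction i using Fin.cases with
      | zero =>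
        induction l using Fin.cases with
        | zero => simp
        | succ l' => simp
      | succ i' =>
        induction l using Fin.cases with
        | zero => simp
        | succ l' =>
          simp only [Fin.cases_succ, ← map_neg]
          rw [← hc'anti i' l']
    · intro i
      apply (MvPolynomial.finSuccEquiv K N).injective
      simp only [map_sum, map_mul]
      have hAi : (MvPolynomial.finSuccEquiv K N) (a i) = A i := rfl
      rw [hAi]
      induction i using Fin.cases with
      | zero =>
        rw [Fin.sum_univ_succ, hA0]
        simp only [Fin.cases_zero, Fin.cases_succ, finSuccEquiv_X_zero, finSuccEquiv_X_succ,
          map_zero, map_neg, AlgEquiv.apply_symm_apply, mul_zero, zero_add, mul_neg]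
        rw [← Finset.sum_neg_distrib]
        exact Finset.sum_congr rfl fun x _ => by ring
      | succ i' =>
        rw [Fin.sum_univ_succ, hAsucc i', hc' i']
        simp only [Fin.cases_zero, Fin.cases_succ, finSuccEquiv_X_zero, finSuccEquiv_X_succ,
          AlgEquiv.apply_symm_apply]
        rw [map_sum]
        simp only [map_mul]
        ring

section helpers

variable (K : Type*) [Field K] (N : ℕ)

lemma finSuccEquiv_symm_C (g : MvPolynomial (Fin N) K) :
    (MvPolynomial.finSuccEquiv K N).symm (Polynomial.C g) = rename Fin.succ g := by
  have h : (MvPolynomial.finSuccEquiv K N).toAlgHom.comp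
        (rename (Fin.succ : Fin N → Fin (N+1)))
      = (Polynomial.CAlgHom : MvPolynomial (Fin N) K →ₐ[K] _) := by
    apply MvPolynomial.algHom_ext
    intro i
    simp [finSuccEquiv_X_succ, Polynomial.CAlgHom]
  have h2 := congrArg (fun (F : MvPolynomial (Fin N) K →ₐ[K] Polynomial (MvPolynomial (Fin N) K))
    => F g) h
  simp only [AlgHom.coe_comp, Function.comp_apply, AlgEquiv.toAlgHom_eq_coe, AlgHom.coe_coe] at h2
  have h3 : (Polynomial.CAlgHom : MvPolynomial (Fin N) K →ₐ[K] _) g = Polynomial.C g := rfl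
  rw [h3] at h2
  rw [← h2]
  exact (MvPolynomial.finSuccEquiv K N).symm_apply_apply _

lemma finSuccEquiv_symm_X :
    (MvPolynomial.finSuccEquiv K N).symm Polynomial.X = X 0 := by
  rw [← finSuccEquiv_X_zero, AlgEquiv.symm_apply_apply]

lemma finSuccEquiv_rename_perm (σ' : Equiv.Perm (Fin N)) (f : MvPolynomial (Fin (N+1)) K) :
    (MvPolynomial.finSuccEquiv K N) (rename (⇑(Equiv.Perm.decomposeFin.symm (0, σ'))) f)
      = (Polynomial.mapAlgHom (rename ⇑σ')) ((MvPolynomial.finSuccEquiv K N) f) := by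
  have h : (MvPolynomial.finSuccEquiv K N).toAlgHom.comp
        (rename (⇑(Equiv.Perm.decomposeFin.symm (0, σ'))))
      = (Polynomial.mapAlgHom (rename ⇑σ')).comp (MvPolynomial.finSuccEquiv K N).toAlgHom := by
    apply MvPolynomial.algHom_ext
    intro i
    induction i using Fin.cases with
    | zero =>
      simp [Equiv.Perm.decomposeFin_symm_apply_zero, Polynomial.mapAlgHom,
        finSuccEquiv_X_zero, Polynomial.map_X]
    | succ j =>
      simp [Equiv.Perm.decomposeFin_symm_apply_succ, Equiv.swap_self, Polynomial.mapAlgHom,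
        finSuccEquiv_X_succ, Polynomial.map_C]
  exact congrArg (fun (F : MvPolynomial (Fin (N+1)) K →ₐ[K] Polynomial (MvPolynomial (Fin N) K))
    => F f) h

lemma rename_succ_esymm (q : ℕ) :
    rename (Fin.succ : Fin N → Fin (N+1)) (esymm (Fin N) K q) = eo K (N+1) q 0 := by
  have hu : (univ : Finset (Fin (N+1))).erase 0
      = Finset.map ⟨Fin.succ, Fin.succ_injective N⟩ univ := by
    ext x
    simp only [mem_erase, mem_univ, and_true, Finset.mem_map, Function.Embedding.coeFn_mk]
    constructor
    · intro hx
      obtain ⟨y, rfl⟩ := Fin.eq_succ_of_ne_zero hx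
      exact ⟨y, trivial, rfl⟩
    · rintro ⟨y, _, rfl⟩
      exact Fin.succ_ne_zero y
  rw [esymm, map_sum, eo, hu, powersetCard_map, sum_map]
  refine sum_congr rfl fun S hS => ?_
  rw [map_prod]
  have : (Finset.mapEmbedding (⟨Fin.succ, Fin.succ_injective N⟩ : Fin N ↪ Fin (N+1))).toEmbedding S
      = S.map ⟨Fin.succ, Fin.succ_injective N⟩ := rfl
  rw [this, Finset.prod_map]
  exact prod_congr rfl fun t _ => by simp


end helpers

section good
variable {K : Type*} [Field K] {N : ℕ}

/-- `g` is a combination of the `eo q 0` with symmetric coefficients. -/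
def GoodP (K : Type*) [Field K] (N : ℕ) (g : MvPolynomial (Fin (N+1)) K) : Prop :=
  ∃ a : ℕ → MvPolynomial (Fin (N+1)) K, (∀ m, (a m).IsSymmetric) ∧
    g = ∑ q ∈ range (N+1), a q * eo K (N+1) q 0

lemma isSymmetric_sum {ι : Type*} {s : Finset ι} {f : ι → MvPolynomial (Fin (N+1)) K}
    (h : ∀ i ∈ s, (f i).IsSymmetric) : (∑ i ∈ s, f i).IsSymmetric := by
  intro σ
  rw [map_sum]
  exact sum_congr rfl fun i hi => h i hi σ

lemma good_add {g h : MvPolynomial (Fin (N+1)) K} (hg : GoodP K N g) (hh : GoodP K N h) :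
    GoodP K N (g + h) := by
  obtain ⟨a, ha, rfl⟩ := hg
  obtain ⟨b, hb, rfl⟩ := hh
  refine ⟨fun q => a q + b q, fun m => (ha m).add (hb m), ?_⟩
  rw [← sum_add_distrib]
  exact sum_congr rfl fun q _ => by ring

lemma good_symm_mul {s g : MvPolynomial (Fin (N+1)) K} (hs : s.IsSymmetric)
    (hg : GoodP K N g) : GoodP K N (s * g) := by
  obtain ⟨a, ha, rfl⟩ := hg
  refine ⟨fun q => s * a q, fun m => hs.mul (ha m), ?_⟩
  rw [mul_sum]
  exact sum_congr rfl fun q _ => by ring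

lemma good_of_symm {s : MvPolynomial (Fin (N+1)) K} (hs : s.IsSymmetric) : GoodP K N s := by
  refine ⟨fun q => if q = 0 then s else 0, ?_, ?_⟩
  · intro m; dsimp only; split
    · exact hs
    · intro σ; simp
  · rw [Finset.sum_eq_single 0]
    · dsimp only
      rw [if_pos rfl, eo_zero, mul_one]
    · intro q _ hq
      dsimp only
      rw [if_neg hq, zero_mul]
    · intro h
      exact absurd (Finset.mem_range.2 (Nat.succ_pos N)) h

lemma good_X0_mul {g : MvPolynomial (Fin (N+1)) K} (hg : GoodP K N g) :
    GoodP K N (X 0 * g) := by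
  obtain ⟨a, ha, rfl⟩ := hg
  refine ⟨fun r => if r = 0 then ∑ q ∈ range (N+1), a q * el K (N+1) (q+1) else -(a (r-1)),
    ?_, ?_⟩
  · intro m; dsimp only; split
    · exact isSymmetric_sum fun q _ => (ha q).mul (el_isSymmetric K (N+1) (q+1))
    · intro σ; rw [map_neg, ha (m-1) σ]
  · have h1 : ∀ q, (X 0 : MvPolynomial (Fin (N+1)) K) * (a q * eo K (N+1) q 0)
        = a q * el K (N+1) (q+1) - a q * eo K (N+1) (q+1) 0 := by
      intro q; rw [el_succ K (N+1) q 0]; ring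
    rw [mul_sum, sum_congr rfl fun q _ => h1 q, sum_sub_distrib]
    rw [Finset.sum_range_succ (fun q => a q * eo K (N+1) (q+1) 0),
      eo_of_ge K 0 (le_refl (N+1)), mul_zero, add_zero]
    conv_rhs => rw [Finset.sum_range_succ']
    have h2 : ∀ i ∈ range N,
        (if i+1 = 0 then ∑ q ∈ range (N+1), a q * el K (N+1) (q+1) else -(a (i+1-1)))
          * eo K (N+1) (i+1) 0 = -(a i * eo K (N+1) (i+1) 0) := by
      intro i _
      rw [if_neg (Nat.succ_ne_zero i), Nat.add_sub_cancel]
      ring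
    rw [sum_congr rfl h2, Finset.sum_neg_distrib]
    dsimp only
    rw [if_pos rfl, eo_zero, mul_one]
    ring

lemma eo_mem_adjoin (q : ℕ) :
    eo K (N+1) q 0 ∈ Algebra.adjoin (↥(symmetricSubalgebra (Fin (N+1)) K))
      {(X 0 : MvPolynomial (Fin (N+1)) K)} := by
  induction q with
  | zero =>
    rw [eo_zero]
    exact one_mem _
  | succ q ihq =>
    have h : eo K (N+1) (q+1) 0 = el K (N+1) (q+1) - X 0 * eo K (N+1) q 0 := by
      rw [el_succ K (N+1) q 0]; ring
    rw [h]
    refine sub_mem ?_ (mul_mem (Algebra.subset_adjoin rfl) ihq)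
    have : el K (N+1) (q+1) = algebraMap (↥(symmetricSubalgebra (Fin (N+1)) K))
        (MvPolynomial (Fin (N+1)) K)
        ⟨el K (N+1) (q+1), (mem_symmetricSubalgebra _).2 (el_isSymmetric K (N+1) (q+1))⟩ := rfl
    rw [this]
    exact Subalgebra.algebraMap_mem _ _

lemma symm_mem_adjoin {s : MvPolynomial (Fin (N+1)) K} (hs : s.IsSymmetric) :
    s ∈ Algebra.adjoin (↥(symmetricSubalgebra (Fin (N+1)) K))
      {(X 0 : MvPolynomial (Fin (N+1)) K)} := by
  have : s = algebraMap (↥(symmetricSubalgebra (Fin (N+1)) K)) (MvPolynomial (Fin (N+1)) K)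
      ⟨s, (mem_symmetricSubalgebra _).2 hs⟩ := rfl
  rw [this]
  exact Subalgebra.algebraMap_mem _ _

lemma rename_succ_symm_mem_adjoin {g : MvPolynomial (Fin N) K} (hg : g.IsSymmetric) :
    rename (Fin.succ : Fin N → Fin (N+1)) g
      ∈ Algebra.adjoin (↥(symmetricSubalgebra (Fin (N+1)) K))
        {(X 0 : MvPolynomial (Fin (N+1)) K)} := by
  obtain ⟨Q, hQ⟩ := esymmAlgHom_fin_surjective K (le_refl N) ⟨g, (mem_symmetricSubalgebra g).2 hg⟩
  have hQg : aeval (fun i : Fin N => esymm (Fin N) K ((i : ℕ)+1)) Q = g := by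
    have h := congrArg Subtype.val hQ
    rwa [esymmAlgHom_apply] at h
  have key : rename (Fin.succ : Fin N → Fin (N+1)) g
      = aeval (fun i : Fin N => eo K (N+1) ((i : ℕ)+1) 0) Q := by
    rw [← hQg]
    have h := congrArg (fun (F : MvPolynomial (Fin N) K →ₐ[K] MvPolynomial (Fin (N+1)) K) => F Q)
      (comp_aeval (fun i : Fin N => esymm (Fin N) K ((i : ℕ)+1))
        (rename (Fin.succ : Fin N → Fin (N+1))))
    simp only [AlgHom.coe_comp, Function.comp_apply] at h
    rw [h]
    have hfun : (fun i : Fin N => rename (Fin.succ : Fin N → Fin (N+1))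
          (esymm (Fin N) K ((i : ℕ)+1)))
        = fun i : Fin N => eo K (N+1) ((i : ℕ)+1) 0 :=
      funext fun i => rename_succ_esymm K N ((i : ℕ)+1)
    rw [hfun]
  rw [key]
  clear key hQg hQ hg g
  induction Q using MvPolynomial.induction_on with
  | C r =>
    rw [aeval_C]
    exact symm_mem_adjoin (fun σ => by rw [algebraMap_eq, rename_C])
  | add p q hp hq =>
    rw [map_add]; exact add_mem hp hq
  | mul_X p i hp =>
    rw [map_mul, aeval_X]
    exact mul_mem hp (eo_mem_adjoin _)

lemma good_of_mem_adjoin {f : MvPolynomial (Fin (N+1)) K}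
    (hf : f ∈ Algebra.adjoin (↥(symmetricSubalgebra (Fin (N+1)) K))
      {(X 0 : MvPolynomial (Fin (N+1)) K)}) : GoodP K N f := by
  rw [Algebra.adjoin_singleton_eq_range_aeval, AlgHom.mem_range] at hf
  obtain ⟨P, rfl⟩ := hf
  induction P using Polynomial.induction_on with
  | C s =>
    rw [Polynomial.aeval_C]
    exact good_of_symm ((mem_symmetricSubalgebra _).1 s.2)
  | add p q hp hq =>
    rw [map_add]; exact good_add hp hq
  | monomial d s hind =>
    have h : (Polynomial.aeval (X 0 : MvPolynomial (Fin (N+1)) K))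
          (Polynomial.C s * Polynomial.X ^ (d+1))
        = X 0 * (Polynomial.aeval (X 0 : MvPolynomial (Fin (N+1)) K))
          (Polynomial.C s * Polynomial.X ^ d) := by
      rw [map_mul, map_mul, map_pow, map_pow, Polynomial.aeval_X, pow_succ]
      ring
    rw [h]
    exact good_X0_mul hind

lemma expand_eo {f : MvPolynomial (Fin (N+1)) K}
    (hf : ∀ σ : Equiv.Perm (Fin (N+1)), σ 0 = 0 → rename (⇑σ) f = f) :
    ∃ a : ℕ → MvPolynomial (Fin (N+1)) K, (∀ m, (a m).IsSymmetric) ∧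
      f = ∑ q ∈ range (N+1), a q * eo K (N+1) q 0 := by
  apply good_of_mem_adjoin
  set F := (MvPolynomial.finSuccEquiv K N) f with hF
  have hcsym : ∀ d, (F.coeff d).IsSymmetric := by
    intro d σ'
    have h1 : rename (⇑(Equiv.Perm.decomposeFin.symm (0, σ'))) f = f :=
      hf _ (Equiv.Perm.decomposeFin_symm_apply_zero 0 σ')
    have h2 := finSuccEquiv_rename_perm K N σ' f
    rw [h1] at h2
    have h3 := congrArg (fun p => Polynomial.coeff p d) h2
    have h4 : (Polynomial.mapAlgHom (rename (⇑σ') :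
        MvPolynomial (Fin N) K →ₐ[K] MvPolynomial (Fin N) K) F).coeff d
        = rename (⇑σ') (F.coeff d) := by
      exact Polynomial.coeff_map _ _
    rw [h4] at h3
    exact h3.symm
  have hre : f = ∑ d ∈ range (F.natDegree + 1),
      rename (Fin.succ : Fin N → Fin (N+1)) (F.coeff d) * X 0 ^ d := by
    have h1 : F = ∑ d ∈ range (F.natDegree+1), Polynomial.C (F.coeff d) * Polynomial.X ^ d := by
      conv_lhs => rw [Polynomial.as_sum_range' F _ (Nat.lt_succ_self _)]
      exact sum_congr rfl fun d _ => (Polynomial.C_mul_X_pow_eq_monomial).symm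
    have h2 := congrArg (MvPolynomial.finSuccEquiv K N).symm h1
    rw [hF, AlgEquiv.symm_apply_apply] at h2
    rw [h2, map_sum]
    refine sum_congr rfl fun d _ => ?_
    rw [map_mul, map_pow, finSuccEquiv_symm_C, finSuccEquiv_symm_X]
  rw [hre]
  have hX0 : (X 0 : MvPolynomial (Fin (N+1)) K) ∈ Algebra.adjoin
      (↥(symmetricSubalgebra (Fin (N+1)) K)) {(X 0 : MvPolynomial (Fin (N+1)) K)} :=
    Algebra.subset_adjoin (Set.mem_singleton _)
  refine Subalgebra.sum_mem _ fun d _ => ?_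
  exact Subalgebra.mul_mem _ (rename_succ_symm_mem_adjoin (hcsym d)) (Subalgebra.pow_mem _ hX0 d)

end good

/-- The coefficient of `u_k` in `h_{ij} = j·ε_i·e_j − i·ε_j·e_i`, where
`ε_m = Σ_i u_i e_{m-1}(x_1,…,x̂_i,…,x_n)`. -/
def hgen (K : Type*) [Field K] (n i j : ℕ) (k : Fin n) : MvPolynomial (Fin n) K :=
  (j : MvPolynomial (Fin n) K) * eo K n (i - 1) k * el K n j -
  (i : MvPolynomial (Fin n) K) * eo K n (j - 1) k * el K n i

theorem stmt_10 {K : Type*} [Field K] [CharZero K] {n : ℕ} (hn : 2 ≤ n)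
    (w : Fin n → MvPolynomial (Fin n) K)
    (hker : ∑ i : Fin n, X i * w i = 0)
    (hinv : ∀ σ : Equiv.Perm (Fin n), ∀ k : Fin n, rename σ (w (σ⁻¹ k)) = w k) :
    ∃ p : ℕ → ℕ → MvPolynomial (Fin n) K,
      (∀ i j, (p i j).IsSymmetric) ∧
      ∀ k : Fin n, w k = ∑ i ∈ Finset.Icc 1 n, ∑ j ∈ Finset.Icc 1 n,
        if i < j then p i j * hgen K n i j k else 0 := by
  obtain ⟨N, rfl⟩ : ∃ N, n = N + 1 := ⟨n - 1, by omega⟩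
  -- Step 1: expand w 0 in the eo basis
  obtain ⟨a, hsym, hw0⟩ := expand_eo (K := K) (N := N) (f := w 0) (by
    intro σ hσ0
    have h0 : σ⁻¹ 0 = 0 := by
      nth_rewrite 1 [← hσ0]
      exact Equiv.symm_apply_apply σ 0
    have h := hinv σ 0
    rwa [h0] at h)
  -- Step 2: all components
  have hwk : ∀ k : Fin (N+1), w k = ∑ q ∈ range (N+1), a q * eo K (N+1) q k := by
    intro k
    have hs := hinv (Equiv.swap 0 k) k
    rw [show (Equiv.swap (0 : Fin (N+1)) k)⁻¹ k = 0 by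
      rw [Equiv.swap_inv, Equiv.swap_apply_right]] at hs
    rw [← hs, hw0, map_sum]
    refine sum_congr rfl fun q _ => ?_
    rw [map_mul, hsym q _, rename_eo, Equiv.swap_apply_left]
  -- Step 3: the kernel relation in terms of the a's
  have hkerA : ∑ q ∈ range (N+1),
      a q * (((q+1 : ℕ) : MvPolynomial (Fin (N+1)) K) * el K (N+1) (q+1)) = 0 := by
    have h1 : ∀ q ∈ range (N+1),
        a q * (((q+1 : ℕ) : MvPolynomial (Fin (N+1)) K) * el K (N+1) (q+1))
        = ∑ k : Fin (N+1), a q * (X k * eo K (N+1) q k) := by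
      intro q _
      rw [← sum_X_mul_eo K (N+1) q, mul_sum]
    rw [sum_congr rfl h1, sum_comm]
    have h2 : ∀ k : Fin (N+1), ∑ q ∈ range (N+1), a q * (X k * eo K (N+1) q k)
        = X k * w k := by
      intro k
      rw [hwk k, mul_sum]
      exact sum_congr rfl fun q _ => by ring
    rw [sum_congr rfl fun k _ => h2 k, hker]
  -- Step 4: the aeval map onto symmetric polynomials
  set Φ : MvPolynomial (Fin (N+1)) K →ₐ[K] MvPolynomial (Fin (N+1)) K :=
    aeval (fun i : Fin (N+1) => esymm (Fin (N+1)) K ((i : ℕ)+1)) with hΦdef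
  have hΦval : ∀ g, Φ g = ((esymmAlgHom (Fin (N+1)) K (N+1)) g : MvPolynomial (Fin (N+1)) K) :=
    fun g => (esymmAlgHom_apply g).symm
  have hinj : Function.Injective Φ := by
    intro x y hxy
    apply esymmAlgHom_fin_injective K (le_refl (N+1))
    exact Subtype.ext (by rw [esymmAlgHom_apply, esymmAlgHom_apply]; exact hxy)
  have hΦsym : ∀ g, (Φ g).IsSymmetric := by
    intro g
    have h := ((esymmAlgHom (Fin (N+1)) K (N+1)) g).2
    rw [mem_symmetricSubalgebra] at h
    rwa [hΦval g]
  -- Step 5: preimages of the a's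
  have hsurj : ∀ m : Fin (N+1), ∃ P, Φ P = a (m : ℕ) := by
    intro m
    obtain ⟨P, hP⟩ := esymmAlgHom_fin_surjective K (le_refl (N+1))
      ⟨a (m : ℕ), (mem_symmetricSubalgebra _).2 (hsym (m : ℕ))⟩
    exact ⟨P, by rw [hΦval]; exact congrArg Subtype.val hP⟩
  choose P hP using hsurj
  -- Step 6: the syzygy
  have hb0 : ∑ m : Fin (N+1),
      X m * ((((m : ℕ)+1 : ℕ) : MvPolynomial (Fin (N+1)) K) * P m) = 0 := by
    apply hinj
    rw [map_sum, map_zero]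
    have h3 : ∀ m : Fin (N+1),
        Φ (X m * ((((m : ℕ)+1 : ℕ) : MvPolynomial (Fin (N+1)) K) * P m))
        = a (m : ℕ) * ((((m : ℕ)+1 : ℕ) : MvPolynomial (Fin (N+1)) K)
            * el K (N+1) ((m : ℕ)+1)) := by
      intro m
      rw [map_mul, map_mul, hP m, map_natCast, hΦdef, aeval_X, el_eq_esymm]
      ring
    rw [sum_congr rfl fun m _ => h3 m]
    rw [Fin.sum_univ_eq_sum_range (fun q => a q * (((q+1 : ℕ) : MvPolynomial (Fin (N+1)) K)
      * el K (N+1) (q+1)))]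
    exact hkerA
  obtain ⟨c, hcanti, hc⟩ := koszul K (N+1)
    (fun m => (((m : ℕ)+1 : ℕ) : MvPolynomial (Fin (N+1)) K) * P m) hb0
  set γ : Fin (N+1) → Fin (N+1) → MvPolynomial (Fin (N+1)) K := fun m l => Φ (c m l) with hγdef
  have hγanti : ∀ m l, γ m l = - γ l m := by
    intro m l
    rw [hγdef]
    dsimp only
    rw [hcanti m l, map_neg]
  have hγsym : ∀ m l, (γ m l).IsSymmetric := fun m l => hΦsym _
  have hγdiag : ∀ m, γ m m = 0 := by
    intro m
    have h := hγanti m m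
    have h2 : γ m m + γ m m = 0 := by
      nth_rewrite 2 [h]
      exact add_neg_cancel _
    have h3 : (2 : K) • γ m m = 0 := by rw [two_smul]; exact h2
    rcases smul_eq_zero.1 h3 with h4 | h4
    · exact absurd h4 two_ne_zero
    · exact h4
  have key : ∀ m : Fin (N+1), (((m : ℕ)+1 : ℕ) : MvPolynomial (Fin (N+1)) K) * a (m : ℕ)
      = ∑ l : Fin (N+1), el K (N+1) ((l : ℕ)+1) * γ m l := by
    intro m
    have h := congrArg Φ (hc m)
    rw [map_mul, map_natCast, hP m, map_sum] at h
    rw [h]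
    refine sum_congr rfl fun l _ => ?_
    rw [map_mul, hΦdef, aeval_X, el_eq_esymm]
  have hKne : ∀ m : ℕ, ((m+1 : ℕ) : K) ≠ 0 := fun m => Nat.cast_ne_zero.2 (Nat.succ_ne_zero m)
  have haA : ∀ m : Fin (N+1), a (m : ℕ)
      = C ((((m : ℕ)+1 : ℕ) : K))⁻¹ * ∑ l : Fin (N+1), el K (N+1) ((l : ℕ)+1) * γ m l := by
    intro m
    rw [← key m]
    have hcast : (((m : ℕ)+1 : ℕ) : MvPolynomial (Fin (N+1)) K)
        = C ((((m : ℕ)+1 : ℕ) : K)) := by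
      rw [map_natCast]
    rw [hcast, ← mul_assoc, ← map_mul, inv_mul_cancel₀ (hKne (m : ℕ)), map_one, one_mul]
  -- Step 7: definition of p
  refine ⟨fun i j => if h : 1 ≤ i ∧ i ≤ N+1 ∧ 1 ≤ j ∧ j ≤ N+1 then
      C (((i : K))⁻¹ * ((j : K))⁻¹) * γ ⟨i-1, by omega⟩ ⟨j-1, by omega⟩ else 0, ?_, ?_⟩
  · intro i j
    dsimp only
    split
    · intro σ
      rw [map_mul, rename_C, hγsym _ _ σ]
    · intro σ
      simp
  -- Step 8: the main identity
  intro k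
  set F : Fin (N+1) → Fin (N+1) → MvPolynomial (Fin (N+1)) K := fun m l =>
    C ((((m : ℕ)+1 : ℕ) : K))⁻¹ * (el K (N+1) ((l : ℕ)+1) * γ m l) * eo K (N+1) (m : ℕ) k
    with hFdef
  have hFdiag : ∀ m, F m m = 0 := by
    intro m
    rw [hFdef]
    dsimp only
    rw [hγdiag m]
    ring
  have stepA : w k = ∑ m : Fin (N+1), ∑ l : Fin (N+1), F m l := by
    rw [hwk k, ← Fin.sum_univ_eq_sum_range (fun q => a q * eo K (N+1) q k)]
    refine sum_congr rfl fun m _ => ?_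
    rw [haA m, mul_sum, sum_mul]
  have stepB : ∑ m : Fin (N+1), ∑ l : Fin (N+1), F m l
      = ∑ m : Fin (N+1), ∑ l : Fin (N+1), (if (m : ℕ) < (l : ℕ) then F m l + F l m else 0) := by
    have hsplit : ∀ m l : Fin (N+1), F m l
        = (if (m : ℕ) < (l : ℕ) then F m l else 0)
          + (if (l : ℕ) < (m : ℕ) then F m l else 0) := by
      intro m l
      rcases lt_trichotomy (m : ℕ) (l : ℕ) with h | h | h
      · rw [if_pos h, if_neg (by omega), add_zero]
      · have he : m = l := Fin.ext h
        subst he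
        rw [if_neg (lt_irrefl _), add_zero, hFdiag]
      · rw [if_neg (by omega), if_pos h, zero_add]
    calc ∑ m : Fin (N+1), ∑ l : Fin (N+1), F m l
        = ∑ m : Fin (N+1), ∑ l : Fin (N+1), ((if (m : ℕ) < (l : ℕ) then F m l else 0)
            + (if (l : ℕ) < (m : ℕ) then F m l else 0)) := by
          exact sum_congr rfl fun m _ => sum_congr rfl fun l _ => hsplit m l
      _ = (∑ m : Fin (N+1), ∑ l : Fin (N+1), (if (m : ℕ) < (l : ℕ) then F m l else 0))
          + ∑ m : Fin (N+1), ∑ l : Fin (N+1), (if (l : ℕ) < (m : ℕ) then F m l else 0) := by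
          rw [← sum_add_distrib]
          exact sum_congr rfl fun m _ => sum_add_distrib
      _ = (∑ m : Fin (N+1), ∑ l : Fin (N+1), (if (m : ℕ) < (l : ℕ) then F m l else 0))
          + ∑ m : Fin (N+1), ∑ l : Fin (N+1), (if (m : ℕ) < (l : ℕ) then F l m else 0) := by
          congr 1
          exact Finset.sum_comm
      _ = ∑ m : Fin (N+1), ∑ l : Fin (N+1), (if (m : ℕ) < (l : ℕ) then F m l + F l m else 0) := by
          rw [← sum_add_distrib]
          refine sum_congr rfl fun m _ => ?_
          rw [← sum_add_distrib]
          refine sum_congr rfl fun l _ => ?_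
          split
          · rfl
          · rw [add_zero]
  have stepC : ∀ m l : Fin (N+1), (m : ℕ) < (l : ℕ) →
      F m l + F l m = (C ((((m : ℕ)+1 : ℕ) : K)⁻¹ * (((l : ℕ)+1 : ℕ) : K)⁻¹) * γ m l)
        * hgen K (N+1) ((m : ℕ)+1) ((l : ℕ)+1) k := by
    intro m l hml
    have hu : C ((((m : ℕ)+1 : ℕ) : K))⁻¹ * C ((((m : ℕ)+1 : ℕ) : K))
        = (1 : MvPolynomial (Fin (N+1)) K) := by
      rw [← map_mul, inv_mul_cancel₀ (hKne (m : ℕ)), map_one]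
    have hv : C ((((l : ℕ)+1 : ℕ) : K))⁻¹ * C ((((l : ℕ)+1 : ℕ) : K))
        = (1 : MvPolynomial (Fin (N+1)) K) := by
      rw [← map_mul, inv_mul_cancel₀ (hKne (l : ℕ)), map_one]
    rw [hFdef]
    dsimp only
    rw [hγanti l m]
    rw [hgen]
    have hc1 : ((((m : ℕ)+1 : ℕ)) : MvPolynomial (Fin (N+1)) K)
        = C ((((m : ℕ)+1 : ℕ) : K)) := by rw [map_natCast]
    have hc2 : ((((l : ℕ)+1 : ℕ)) : MvPolynomial (Fin (N+1)) K)
        = C ((((l : ℕ)+1 : ℕ) : K)) := by rw [map_natCast]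
    rw [Nat.add_sub_cancel, Nat.add_sub_cancel, hc1, hc2, map_mul]
    linear_combination (-(C ((((m : ℕ)+1 : ℕ) : K))⁻¹ * γ m l * eo K (N+1) (m : ℕ) k
        * el K (N+1) ((l : ℕ)+1))) * hv
      + (C ((((l : ℕ)+1 : ℕ) : K))⁻¹ * γ m l * eo K (N+1) (l : ℕ) k
        * el K (N+1) ((m : ℕ)+1)) * hu
  -- Step 9: reindex the Icc sums
  have hIcc : Finset.Icc 1 (N+1) = Finset.map ⟨fun q => q+1, add_left_injective 1⟩
      (Finset.range (N+1)) := by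
    ext x
    simp only [Finset.mem_Icc, Finset.mem_map, Finset.mem_range, Function.Embedding.coeFn_mk]
    constructor
    · intro hx; exact ⟨x - 1, by omega, by omega⟩
    · rintro ⟨y, hy, rfl⟩; omega
  have hR : ∀ (g : ℕ → ℕ → MvPolynomial (Fin (N+1)) K),
      ∑ i ∈ Finset.Icc 1 (N+1), ∑ j ∈ Finset.Icc 1 (N+1), g i j
      = ∑ m : Fin (N+1), ∑ l : Fin (N+1), g ((m : ℕ)+1) ((l : ℕ)+1) := by
    intro g
    calc ∑ i ∈ Finset.Icc 1 (N+1), ∑ j ∈ Finset.Icc 1 (N+1), g i j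
        = ∑ q ∈ Finset.range (N+1), ∑ j ∈ Finset.Icc 1 (N+1), g (q+1) j := by
          rw [hIcc, Finset.sum_map]
          simp only [Function.Embedding.coeFn_mk]
      _ = ∑ m : Fin (N+1), ∑ j ∈ Finset.Icc 1 (N+1), g ((m : ℕ)+1) j :=
          (Fin.sum_univ_eq_sum_range (fun q => ∑ j ∈ Finset.Icc 1 (N+1), g (q+1) j) (N+1)).symm
      _ = ∑ m : Fin (N+1), ∑ l : Fin (N+1), g ((m : ℕ)+1) ((l : ℕ)+1) := by
          refine sum_congr rfl fun m _ => ?_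
          rw [hIcc, Finset.sum_map]
          simp only [Function.Embedding.coeFn_mk]
          exact (Fin.sum_univ_eq_sum_range (fun r => g ((m : ℕ)+1) (r+1)) (N+1)).symm
  rw [stepA, stepB, hR]
  refine sum_congr rfl fun m _ => sum_congr rfl fun l _ => ?_
  have hm := m.isLt
  have hl := l.isLt
  by_cases hml : (m : ℕ) < (l : ℕ)
  · rw [if_pos hml, if_pos (Nat.succ_lt_succ hml), stepC m l hml]
    have hcond : 1 ≤ (m : ℕ)+1 ∧ (m : ℕ)+1 ≤ N+1 ∧ 1 ≤ (l : ℕ)+1 ∧ (l : ℕ)+1 ≤ N+1 := by omega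
    dsimp only
    rw [dif_pos hcond]
    have he1 : (⟨(m : ℕ)+1-1, by omega⟩ : Fin (N+1)) = m := Fin.ext (by simp)
    have he2 : (⟨(l : ℕ)+1-1, by omega⟩ : Fin (N+1)) = l := Fin.ext (by simp)
    rw [he1, he2]
  · rw [if_neg hml, if_neg (by omega)]
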